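/- Let λ₁, λ₂, λ₃ : ℝ → ℝ be functions, each differentiable at 0, and suppose there is an open interval I containing 0 such that for every ε ∈ I: λ₁(ε)·λ₂(ε)·λ₃(ε) = 1, λ₁(ε) + λ₂(ε) + λ₃(ε) = 5 + ε, and λ₁(ε)·λ₂(ε) + λ₁(ε)·λ₃(ε) + λ₂(ε)·λ₃(ε) = 6 + 2ε. If 1 < λ₂(0) < 2, then λ₂′(0) ≠ 0. -/

import Mathlib

/-- Gogolev–Kolmogorov–Maimon conservative family: if three functions, differentiable
at `0`, satisfy the elementary symmetric relations `λ₁λ₂λ₃ = 1`,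
`λ₁ + λ₂ + λ₃ = 5 + ε`, `λ₁λ₂ + λ₁λ₃ + λ₂λ₃ = 6 + 2ε` on an open interval around `0`,
and `1 < λ₂(0) < 2`, then `λ₂′(0) ≠ 0`. -/
theorem stmt15 (l1 l2 l3 : ℝ → ℝ)
    (h1 : DifferentiableAt ℝ l1 0) (h2 : DifferentiableAt ℝ l2 0)
    (h3 : DifferentiableAt ℝ l3 0)
    (δ : ℝ) (hδ : 0 < δ)
    (hprod : ∀ ε ∈ Set.Ioo (-δ) δ, l1 ε * l2 ε * l3 ε = 1)
    (hsum : ∀ ε ∈ Set.Ioo (-δ) δ, l1 ε + l2 ε + l3 ε = 5 + ε)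
    (hsym : ∀ ε ∈ Set.Ioo (-δ) δ,
      l1 ε * l2 ε + l1 ε * l3 ε + l2 ε * l3 ε = 6 + 2 * ε)
    (hl2 : l2 0 ∈ Set.Ioo (1:ℝ) 2) :
    deriv l2 0 ≠ 0 := by
  intro hzero
  obtain ⟨ha1, ha2⟩ := hl2
  set a := l2 0 with ha
  set d := deriv l2 0 with hd
  have hdA : HasDerivAt l2 d 0 := h2.hasDerivAt
  have hA : HasDerivAt (fun ε : ℝ => (5 + ε)) 1 0 := by
    simpa using (hasDerivAt_id (0 : ℝ)).const_add 5
  have hB : HasDerivAt (fun ε : ℝ => (6 + 2 * ε)) 2 0 := by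
    have := ((hasDerivAt_id (0 : ℝ)).const_mul 2).const_add 6
    simpa using this
  have H : HasDerivAt (fun ε : ℝ => l2 ε ^ 3 - (5 + ε) * l2 ε ^ 2 + (6 + 2 * ε) * l2 ε - 1)
      ((3 * l2 0 ^ 2 * d) - (1 * l2 0 ^ 2 + (5 + 0) * (2 * l2 0 ^ 1 * d))
        + (2 * l2 0 + (6 + 2 * 0) * d)) 0 := by
    have := (((hdA.pow 3).sub (hA.mul (hdA.pow 2))).add (hB.mul hdA)).sub_const 1
    refine (this.congr_deriv (by norm_num)).congr_of_eventuallyEq (Filter.Eventually.of_forall fun ε => by simp)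
  have hmem : Set.Ioo (-δ) δ ∈ nhds (0 : ℝ) :=
    Ioo_mem_nhds (by linarith) hδ
  have hev : (fun ε : ℝ => l2 ε ^ 3 - (5 + ε) * l2 ε ^ 2 + (6 + 2 * ε) * l2 ε - 1)
      =ᶠ[nhds (0 : ℝ)] fun _ => (0 : ℝ) := by
    filter_upwards [hmem] with ε hε
    have e1 := hprod ε hε
    have e2 := hsum ε hε
    have e3 := hsym ε hε
    linear_combination (l2 ε ^ 2) * e2 - (l2 ε) * e3 + e1 - e2 * l2 ε ^ 2 + e2 * l2 ε ^ 2
  have H0 : HasDerivAt (fun _ : ℝ => (0 : ℝ))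
      ((3 * l2 0 ^ 2 * d) - (1 * l2 0 ^ 2 + (5 + 0) * (2 * l2 0 ^ 1 * d))
        + (2 * l2 0 + (6 + 2 * 0) * d)) 0 :=
    H.congr_of_eventuallyEq hev.symm
  have := H0.unique (hasDerivAt_const 0 0)
  rw [hzero, ← ha] at this
  nlinarith [this, ha1, ha2]
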